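/- If ρ is a minimizer of the causal action under variations of bounded total variation preserving total volume, then the function ℓ(x) = ∫ L(x,y) dρ(y) is constant on the support of ρ, and this constant equals the infimum of ℓ over 𝓕 (Euler–Lagrange equations); in the finite (discrete) setting with 𝓕 a finite set and ρ a measure on 𝓕, a minimizer of S[ρ] = Σ_{x,y} L(x,y) ρ(x) ρ(y) subject to Σ_x ρ(x) = const satisfies ℓ(x) = min_{z∈𝓕} ℓ(z) for every x with ρ(x) > 0. -/

import Mathlib

open Finset

/-- Discrete Euler–Lagrange equations for the causal action: if `ρ` minimizes
`S[ρ] = Σ_{x,y} L x y * ρ x * ρ y` among nonnegative weights of fixed total mass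
`c > 0`, then `ℓ(x) = Σ_y L x y * ρ y` attains its minimum over `𝓕` at every
point of the support of `ρ`. -/
theorem discrete_euler_lagrange {F : Type*} [Fintype F]
    (L : F → F → ℝ) (hLnonneg : ∀ x y, 0 ≤ L x y) (hLsymm : ∀ x y, L x y = L y x)
    (ρ : F → ℝ) (hρ : ∀ x, 0 ≤ ρ x) (c : ℝ) (hc : 0 < c) (hmass : ∑ x, ρ x = c)
    (hmin : ∀ ρ' : F → ℝ, (∀ x, 0 ≤ ρ' x) → (∑ x, ρ' x = c) →
      ∑ x, ∑ y, L x y * ρ x * ρ y ≤ ∑ x, ∑ y, L x y * ρ' x * ρ' y) :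
    ∀ x : F, 0 < ρ x → ∀ z : F, ∑ y, L x y * ρ y ≤ ∑ y, L z y * ρ y := by
  classical
  intro x hx z
  by_contra hlt
  push_neg at hlt
  set ℓ : F → ℝ := fun w => ∑ y, L w y * ρ y with hℓ
  have hne : z ≠ x := by
    rintro rfl; exact lt_irrefl _ hlt
  set d : ℝ := ℓ x - ℓ z with hd
  have hdpos : 0 < d := sub_pos.mpr hlt
  set A : ℝ := L z z - 2 * L x z + L x x with hA
  set t : ℝ := min (ρ x) (d / (|A| + 1)) with ht
  have hApos : 0 < |A| + 1 := by positivity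
  have htpos : 0 < t := lt_min hx (by positivity)
  have htle : t ≤ ρ x := min_le_left _ _
  have htle2 : t ≤ d / (|A| + 1) := min_le_right _ _
  set σ : F → ℝ := fun w => (if w = z then (1:ℝ) else 0) - (if w = x then (1:ℝ) else 0)
    with hσ
  set ρ' : F → ℝ := fun w => ρ w + t * σ w with hρ'
  have hσsum : ∑ w, σ w = 0 := by
    simp [hσ, Finset.sum_sub_distrib]
  have hnn : ∀ w, 0 ≤ ρ' w := by
    intro w
    simp only [hρ', hσ]
    by_cases hwz : w = z
    · simp [hwz, hne]
      nlinarith [hρ z]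
    · by_cases hwx : w = x
      · simp [hwx, Ne.symm hne]
        nlinarith [hρ x, htle]
      · simp [hwz, hwx]
        exact hρ w
  have hmass' : ∑ w, ρ' w = c := by
    simp [hρ', Finset.sum_add_distrib, ← Finset.mul_sum, hσsum, hmass]
  have key := hmin ρ' hnn hmass'
  -- compute S[ρ']
  have hcross1 : ∑ u, ∑ v, L u v * σ u * ρ v = ℓ z - ℓ x := by
    have h1 : ∀ u, ∑ v, L u v * σ u * ρ v = σ u * ℓ u := by
      intro u; rw [hℓ, Finset.mul_sum]; exact Finset.sum_congr rfl fun v _ => by ring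
    simp only [h1]
    simp only [h1, hσ, sub_mul, one_mul, zero_mul, ite_mul, Finset.sum_sub_distrib,
      Finset.sum_ite_eq', Finset.mem_univ, if_true]
  have hcross2 : ∑ u, ∑ v, L u v * ρ u * σ v = ℓ z - ℓ x := by
    have : ∀ u v, L u v * ρ u * σ v = L v u * σ v * ρ u := by
      intro u v; rw [hLsymm u v]; ring
    simp only [this]
    rw [Finset.sum_comm]
    exact hcross1
  have hquad : ∑ u, ∑ v, L u v * σ u * σ v = A := by
    simp only [hσ, sub_mul, mul_sub, one_mul, zero_mul, ite_mul, mul_ite, mul_one, mul_zero,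
      Finset.sum_sub_distrib]
    simp [Finset.sum_ite_eq', hA, hLsymm x z]
    ring
  have hexp : ∑ u, ∑ v, L u v * ρ' u * ρ' v
      = (∑ u, ∑ v, L u v * ρ u * ρ v) + t * (ℓ z - ℓ x) + t * (ℓ z - ℓ x) + t^2 * A := by
    have : ∀ u v, L u v * ρ' u * ρ' v
        = L u v * ρ u * ρ v + t * (L u v * σ u * ρ v) + t * (L u v * ρ u * σ v)
          + t^2 * (L u v * σ u * σ v) := by
      intro u v; simp only [hρ']; ring
    simp only [this, Finset.sum_add_distrib, ← Finset.mul_sum, hcross1, hcross2, hquad]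
  rw [hexp] at key
  have htA : t * A < 2 * d := by
    have h1 : t * A ≤ t * |A| := by
      have := le_abs_self A
      nlinarith
    have h2 : t * |A| ≤ (d / (|A| + 1)) * |A| := by
      have : (0:ℝ) ≤ |A| := abs_nonneg A
      nlinarith
    have h3 : (d / (|A| + 1)) * |A| < d := by
      rw [div_mul_eq_mul_div, div_lt_iff₀ hApos]
      nlinarith
    linarith
  have key2 : 0 ≤ t * (ℓ z - ℓ x) + t * (ℓ z - ℓ x) + t ^ 2 * A := by linarith
  have hq : t * (t * A) < t * (2 * d) := mul_lt_mul_of_pos_left htA htpos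
  have e1 : t ^ 2 * A = t * (t * A) := by ring
  have e2 : t * (2 * d) = 2 * (t * d) := by ring
  have e3 : t * (ℓ z - ℓ x) = -(t * d) := by rw [hd]; ring
  have e4 : 0 < t * d := mul_pos htpos hdpos
  linarith [key2, hq, e1, e2, e3, e4]
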